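/- Let d ≥ 1 and q ≥ 1 be integers, let Ψ = (ψ_{jk}) be distributed according to the Haar probability measure on the unitary group U(d), and let j_1,…,j_q, k_1,…,k_q, j_1',…,j_q', k_1',…,k_q' ∈ {1,…,d}. If the multiset {k_1,…,k_q} differs from the multiset {k_1',…,k_q'}, or the multiset {j_1,…,j_q} differs from the multiset {j_1',…,j_q'}, then E[ ψ_{j_1 k_1} ⋯ ψ_{j_q k_q} · conj(ψ_{j_1' k_1'}) ⋯ conj(ψ_{j_q' k_q'}) ] = 0. -/

import Mathlib

open MeasureTheory

lemma unitary_entry_norm_le {d : ℕ} {A : Matrix (Fin d) (Fin d) ℂ}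
    (hA : A ∈ Matrix.unitaryGroup (Fin d) ℂ) (i k : Fin d) : ‖A i k‖ ≤ 1 := by
  have h1 : A * star A = 1 := (Matrix.mem_unitaryGroup_iff).mp hA
  have h2 : ∑ l, A i l * (starRingEnd ℂ) (A i l) = 1 := by
    have := congrFun (congrFun h1 i) i
    simpa [Matrix.mul_apply, Matrix.star_apply, Matrix.one_apply] using this
  have h3 : ∑ l, Complex.normSq (A i l) = 1 := by
    have : ((∑ l, Complex.normSq (A i l) : ℝ) : ℂ) = ((1:ℝ):ℂ) := by
      push_cast
      rw [← h2]
      exact Finset.sum_congr rfl fun l _ => (Complex.mul_conj _).symm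
    exact_mod_cast this
  have h4 : Complex.normSq (A i k) ≤ 1 := by
    rw [← h3]
    exact Finset.single_le_sum (fun l _ => Complex.normSq_nonneg _) (Finset.mem_univ k)
  have h5 : ‖A i k‖ ^ 2 ≤ 1 := by
    rwa [Complex.sq_norm]
  nlinarith [norm_nonneg (A i k)]

instance instCompactUG {d : ℕ} : CompactSpace (Matrix.unitaryGroup (Fin d) ℂ) := by
  have hK : IsCompact (Matrix.of '' (Set.univ.pi fun _ : Fin d =>
      Set.univ.pi fun _ : Fin d => Metric.closedBall (0:ℂ) 1)) := by
    refine IsCompact.image ?_ ?_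
    · exact isCompact_univ_pi fun _ => isCompact_univ_pi fun _ => isCompact_closedBall _ _
    · exact continuous_matrix fun i j => (continuous_apply j).comp (continuous_apply i)
  have hC : IsCompact (Matrix.unitaryGroup (Fin d) ℂ : Set (Matrix (Fin d) (Fin d) ℂ)) := by
    refine hK.of_isClosed_subset ?_ ?_
    · have : (Matrix.unitaryGroup (Fin d) ℂ : Set (Matrix (Fin d) (Fin d) ℂ)) =
          {A | star A * A = 1} ∩ {A | A * star A = 1} := by
        ext A; exact Unitary.mem_iff
      rw [this]
      exact (isClosed_eq (continuous_star.mul continuous_id) continuous_const).inter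
        (isClosed_eq (continuous_id.mul continuous_star) continuous_const)
    · intro A hA
      refine ⟨fun i j => A i j, ?_, rfl⟩
      simp only [Set.mem_univ_pi, Metric.mem_closedBall, dist_zero_right]
      intro i j
      exact unitary_entry_norm_le hA i j
  exact isCompact_iff_compactSpace.mp hC

instance instContInvUG {d : ℕ} : ContinuousInv (Matrix.unitaryGroup (Fin d) ℂ) := ⟨by
  have : (fun x : Matrix.unitaryGroup (Fin d) ℂ => x⁻¹) = fun x => star x := by
    funext x; exact (Unitary.star_eq_inv x).symm
  rw [this]
  apply continuous_induced_rng.2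
  show Continuous fun x : Matrix.unitaryGroup (Fin d) ℂ =>
    ((star x : Matrix.unitaryGroup (Fin d) ℂ) : Matrix (Fin d) (Fin d) ℂ)
  simp only [Unitary.coe_star]
  exact continuous_subtype_val.star⟩

instance instTopGroupUG {d : ℕ} : IsTopologicalGroup (Matrix.unitaryGroup (Fin d) ℂ) := {}

lemma exists_unit_phase (m m' : ℕ) (h : m ≠ m') :
    ∃ z : ℂ, ‖z‖ = 1 ∧ z ^ m * ((starRingEnd ℂ) z) ^ m' = -1 := by
  set n : ℤ := (m : ℤ) - m' with hn_def
  have hn : (n : ℝ) ≠ 0 := by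
    simp only [hn_def]
    push_cast
    intro hc
    exact h (by exact_mod_cast sub_eq_zero.mp hc)
  set x : ℝ := Real.pi / n with hx
  refine ⟨Complex.exp ((x : ℝ) * Complex.I), ?_, ?_⟩
  · exact Complex.norm_exp_ofReal_mul_I _
  · have hconj : (starRingEnd ℂ) (Complex.exp ((x:ℝ) * Complex.I)) =
        Complex.exp (-((x:ℝ) * Complex.I)) := by
      rw [← Complex.exp_conj]
      congr 1
      simp [Complex.conj_I]
    rw [hconj, ← Complex.exp_nat_mul, ← Complex.exp_nat_mul, ← Complex.exp_add]
    have hnC : (n : ℂ) ≠ 0 := by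
      intro hc
      exact hn (by exact_mod_cast hc)
    have h1 : ((m:ℂ) - m') * (x:ℂ) = (Real.pi:ℂ) := by
      have h2 : ((m : ℂ) - m') = (n : ℂ) := by push_cast [hn_def]; ring
      rw [h2, hx]
      push_cast
      field_simp
    have key : (m : ℂ) * ((x:ℝ) * Complex.I) + (m' : ℂ) * -((x:ℝ) * Complex.I) =
        (Real.pi : ℂ) * Complex.I := by
      calc (m : ℂ) * ((x:ℝ) * Complex.I) + (m' : ℂ) * -((x:ℝ) * Complex.I)
          = ((m:ℂ) - m') * (x:ℂ) * Complex.I := by ring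
        _ = (Real.pi : ℂ) * Complex.I := by rw [h1]
    rw [key, Complex.exp_pi_mul_I]

lemma vanish_of_neg {X : Type*} [MeasurableSpace X] (P : Measure X) (F : X → ℂ)
    (hF : AEStronglyMeasurable F P) (T : X → X) (hT : Measurable T)
    (hTP : P.map T = P) (hFT : ∀ x, F (T x) = (-1) * F x) :
    ∫ x, F x ∂P = 0 := by
  have h1 : ∫ x, F x ∂P = ∫ x, F (T x) ∂P := by
    conv_lhs => rw [← hTP]
    exact integral_map hT.aemeasurable (by rwa [hTP])
  have h2 : ∫ x, F (T x) ∂P = -1 * ∫ x, F x ∂P := by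
    simp only [hFT]
    have : ∫ x, -1 * F x ∂P = (-1:ℂ) • ∫ x, F x ∂P := by
      rw [← integral_smul]
      simp
    simpa using this
  have := h1.trans h2
  linear_combination (this) / 2

lemma right_invariant_of_left {G : Type*} [Group G] [TopologicalSpace G] [IsTopologicalGroup G]
    [CompactSpace G] [MeasurableSpace G] [BorelSpace G]
    (P : Measure G) [IsProbabilityMeasure P]
    (hP : ∀ g : G, P.map (fun x => g * x) = P) (g : G) :
    P.map (fun x => x * g) = P := by
  haveI : P.IsMulLeftInvariant := ⟨hP⟩
  haveI : P.IsOpenPosMeasure :=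
    isOpenPosMeasure_of_mulLeftInvariant_of_compact Set.univ isCompact_univ (by simp)
  haveI : P.IsHaarMeasure := {}
  set Q := P.map (fun x => x * g) with hQ
  haveI : IsProbabilityMeasure Q :=
    Measure.isProbabilityMeasure_map (measurable_mul_const g).aemeasurable
  haveI : Q.IsMulLeftInvariant := ⟨fun h => by
    rw [hQ, Measure.map_map (measurable_const_mul h) (measurable_mul_const g),
      (by funext x; simp [mul_assoc] :
        ((fun x => h * x) ∘ (fun x => x * g)) = ((fun x => x * g) ∘ (fun x => h * x))),
      ← Measure.map_map (measurable_mul_const g) (measurable_const_mul h), hP]⟩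
  have heq := Measure.isMulInvariant_eq_smul_of_compactSpace Q P
  have hc : (Q.haarScalarFactor P : ENNReal) = 1 := by
    have h2 := congrArg (fun μ : Measure G => μ Set.univ) heq
    simp only [Measure.smul_apply, measure_univ, ENNReal.smul_def, smul_eq_mul, mul_one] at h2
    exact h2.symm
  have hc' : Q.haarScalarFactor P = 1 := by exact_mod_cast hc
  rw [heq, hc', one_smul]

lemma prod_ite_count {q d : ℕ} (f : Fin q → Fin d) (a : Fin d) (z : ℂ) :
    (∏ i, if f i = a then z else 1) = z ^ (Multiset.map f Finset.univ.val).count a := by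
  rw [Finset.prod_ite, Finset.prod_const, Finset.prod_const_one, mul_one]
  congr 1
  rw [Multiset.count_map, Finset.card, Finset.filter_val]
  congr 1
  simp [eq_comm]

lemma diag_unitary_mem {d : ℕ} {z : ℂ} (hz : ‖z‖ = 1) (a : Fin d) :
    Matrix.diagonal (fun j => if j = a then z else 1) ∈ Matrix.unitaryGroup (Fin d) ℂ := by
  rw [Matrix.mem_unitaryGroup_iff, Matrix.star_eq_conjTranspose,
    Matrix.diagonal_conjTranspose, Matrix.diagonal_mul_diagonal]
  have : (fun i => (if i = a then z else 1) * star (fun j => if j = a then z else 1) i) =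
      fun _ => (1:ℂ) := by
    funext j
    by_cases hj : j = a <;>
      simp [hj, Pi.star_apply, Complex.star_def, Complex.mul_conj,
        Complex.normSq_eq_norm_sq, hz]
  rw [this, Matrix.diagonal_one]

theorem stmt9 (d q : ℕ) (hd : 1 ≤ d) (hq : 1 ≤ q)
    [MeasurableSpace (Matrix.unitaryGroup (Fin d) ℂ)]
    [BorelSpace (Matrix.unitaryGroup (Fin d) ℂ)]
    (P : Measure (Matrix.unitaryGroup (Fin d) ℂ)) [IsProbabilityMeasure P]
    (hP : ∀ g : Matrix.unitaryGroup (Fin d) ℂ, P.map (fun x => g * x) = P)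
    (js ks js' ks' : Fin q → Fin d)
    (h : Multiset.map ks Finset.univ.val ≠ Multiset.map ks' Finset.univ.val ∨
      Multiset.map js Finset.univ.val ≠ Multiset.map js' Finset.univ.val) :
    (∫ Ψ, (∏ i, Ψ.1 (js i) (ks i)) *
      ∏ i, (starRingEnd ℂ) (Ψ.1 (js' i) (ks' i)) ∂P) = 0 := by
  classical
  set F : Matrix.unitaryGroup (Fin d) ℂ → ℂ := fun Ψ =>
    (∏ i, Ψ.1 (js i) (ks i)) * ∏ i, (starRingEnd ℂ) (Ψ.1 (js' i) (ks' i)) with hF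
  have hFc : Continuous F := by
    apply Continuous.mul
    · exact continuous_finset_prod _ fun i _ =>
        (continuous_apply (ks i)).comp ((continuous_apply (js i)).comp continuous_subtype_val)
    · exact continuous_finset_prod _ fun i _ => Complex.continuous_conj.comp
        ((continuous_apply (ks' i)).comp ((continuous_apply (js' i)).comp continuous_subtype_val))
  rcases h with hcol | hrow
  · -- column case: right translation by a diagonal unitary
    obtain ⟨a, ha⟩ : ∃ a, (Multiset.map ks Finset.univ.val).count a ≠
        (Multiset.map ks' Finset.univ.val).count a := by
      by_contra hc
      push_neg at hc
      exact hcol (Multiset.ext.mpr hc)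
    obtain ⟨z, hz1, hz2⟩ := exists_unit_phase _ _ ha
    set D : Fin d → ℂ := fun j => if j = a then z else 1 with hD
    set g : Matrix.unitaryGroup (Fin d) ℂ := ⟨Matrix.diagonal D, diag_unitary_mem hz1 a⟩
      with hg
    refine vanish_of_neg P F hFc.aestronglyMeasurable (fun Ψ => Ψ * g)
      (measurable_mul_const g) (right_invariant_of_left P hP g) ?_
    intro Ψ
    have hent : ∀ j k, (Ψ * g).1 j k = Ψ.1 j k * D k := by
      intro j k
      show (Ψ.1 * Matrix.diagonal D) j k = _
      exact Matrix.mul_diagonal D Ψ.1 j k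
    have e1 : (∏ i, D (ks i)) = z ^ (Multiset.map ks Finset.univ.val).count a :=
      prod_ite_count ks a z
    have e2 : (∏ i, (starRingEnd ℂ) (D (ks' i))) =
        ((starRingEnd ℂ) z) ^ (Multiset.map ks' Finset.univ.val).count a := by
      have hcongr : ∀ i, (starRingEnd ℂ) (D (ks' i)) =
          if ks' i = a then (starRingEnd ℂ) z else 1 := by
        intro i; by_cases hi : ks' i = a <;> simp [hD, hi]
      rw [Finset.prod_congr rfl fun i _ => hcongr i]
      exact prod_ite_count ks' a _
    show F (Ψ * g) = -1 * F Ψ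
    rw [hF]
    simp only [hent, map_mul, Finset.prod_mul_distrib, e1, e2]
    rw [← hz2]
    ring
  · -- row case: left translation by a diagonal unitary
    obtain ⟨a, ha⟩ : ∃ a, (Multiset.map js Finset.univ.val).count a ≠
        (Multiset.map js' Finset.univ.val).count a := by
      by_contra hc
      push_neg at hc
      exact hrow (Multiset.ext.mpr hc)
    obtain ⟨z, hz1, hz2⟩ := exists_unit_phase _ _ ha
    set D : Fin d → ℂ := fun j => if j = a then z else 1 with hD
    set g : Matrix.unitaryGroup (Fin d) ℂ := ⟨Matrix.diagonal D, diag_unitary_mem hz1 a⟩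
      with hg
    refine vanish_of_neg P F hFc.aestronglyMeasurable (fun Ψ => g * Ψ)
      (measurable_const_mul g) (hP g) ?_
    intro Ψ
    have hent : ∀ j k, (g * Ψ).1 j k = D j * Ψ.1 j k := by
      intro j k
      show (Matrix.diagonal D * Ψ.1) j k = _
      exact Matrix.diagonal_mul D Ψ.1 j k
    have e1 : (∏ i, D (js i)) = z ^ (Multiset.map js Finset.univ.val).count a :=
      prod_ite_count js a z
    have e2 : (∏ i, (starRingEnd ℂ) (D (js' i))) =
        ((starRingEnd ℂ) z) ^ (Multiset.map js' Finset.univ.val).count a := by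
      have hcongr : ∀ i, (starRingEnd ℂ) (D (js' i)) =
          if js' i = a then (starRingEnd ℂ) z else 1 := by
        intro i; by_cases hi : js' i = a <;> simp [hD, hi]
      rw [Finset.prod_congr rfl fun i _ => hcongr i]
      exact prod_ite_count js' a _
    show F (g * Ψ) = -1 * F Ψ
    rw [hF]
    simp only [hent, map_mul, Finset.prod_mul_distrib, e1, e2]
    rw [← hz2]
    ring
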